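/- Let N ≥ 1, ε > 0, c ∈ ℝ^N with c₁ ≤ c₂ ≤ ⋯ ≤ c_N, and ℓ, u ∈ ℝ with ℓ ≤ c₁ + (u − c_N) and u ≥ c_N. Define the feasible set A = [ℓ, u]^N and the cost f(a) = −Mean(a − c)/(Var(a − c) + ε). If a* ∈ A is a global minimizer of f over A, then max_{i ∈ [N]} a*ᵢ = u. -/

import Mathlib

noncomputable def eMean {N : ℕ} (x : Fin N → ℝ) : ℝ := (∑ i, x i) / N

noncomputable def eVar {N : ℕ} (x : Fin N → ℝ) : ℝ :=
  (∑ i, (x i - eMean x) ^ 2) / N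

noncomputable def cost {N : ℕ} (c : Fin N → ℝ) (ε : ℝ) (a : Fin N → ℝ) : ℝ :=
  -(eMean (fun i => a i - c i)) / (eVar (fun i => a i - c i) + ε)

lemma eMean_shift {N : ℕ} (hN : 0 < N) (x : Fin N → ℝ) (α : ℝ) :
    eMean (fun i => x i + α) = eMean x + α := by
  have hNne : (N : ℝ) ≠ 0 := Nat.cast_ne_zero.mpr hN.ne'
  simp only [eMean, Finset.sum_add_distrib, Finset.sum_const, Finset.card_univ,
    Fintype.card_fin, nsmul_eq_mul]
  field_simp

lemma eVar_shift {N : ℕ} (hN : 0 < N) (x : Fin N → ℝ) (α : ℝ) :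
    eVar (fun i => x i + α) = eVar x := by
  unfold eVar
  rw [eMean_shift hN]
  congr 1
  apply Finset.sum_congr rfl
  intro i _
  ring

lemma eVar_nonneg {N : ℕ} (x : Fin N → ℝ) : 0 ≤ eVar x := by
  apply div_nonneg
  · exact Finset.sum_nonneg fun i _ => sq_nonneg _
  · positivity

theorem max_allocation_eq_u {N : ℕ} (hN : 0 < N) (ε : ℝ) (hε : 0 < ε)
    (c : Fin N → ℝ) (hsorted : ∀ i j : Fin N, i ≤ j → c i ≤ c j)
    (l u : ℝ) (hu : c ⟨N - 1, Nat.sub_lt hN one_pos⟩ ≤ u)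
    (hl : l ≤ c ⟨0, hN⟩ + (u - c ⟨N - 1, Nat.sub_lt hN one_pos⟩))
    (a : Fin N → ℝ) (haA : ∀ i, l ≤ a i ∧ a i ≤ u)
    (hmin : ∀ b : Fin N → ℝ, (∀ i, l ≤ b i ∧ b i ≤ u) → cost c ε a ≤ cost c ε b) :
    Finset.univ.sup' (Finset.univ_nonempty_iff.mpr ⟨⟨0, hN⟩⟩) a = u := by
  have ne : (Finset.univ : Finset (Fin N)).Nonempty := ⟨⟨0, hN⟩, Finset.mem_univ _⟩
  show Finset.univ.sup' ne a = u
  set M := Finset.univ.sup' ne a with hM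
  have hMle : M ≤ u := Finset.sup'_le ne a fun i _ => (haA i).2
  by_contra hne
  have hMlt : M < u := lt_of_le_of_ne hMle hne
  set α := u - M with hα
  have hαpos : 0 < α := sub_pos.mpr hMlt
  set b := fun i => a i + α with hb
  have hbA : ∀ i, l ≤ b i ∧ b i ≤ u := by
    intro i
    constructor
    · have := (haA i).1
      simp only [hb]; linarith
    · have hai : a i ≤ M := Finset.le_sup' a (Finset.mem_univ i)
      simp only [hb]; linarith
  have hle := hmin b hbA
  set m := eMean (fun i => a i - c i) with hm
  set V := eVar (fun i => a i - c i) with hV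
  have hmean : eMean (fun i => b i - c i) = m + α := by
    have : (fun i => b i - c i) = (fun i => (a i - c i) + α) := by
      funext i; simp [hb]; ring
    rw [this, eMean_shift hN]
  have hvar : eVar (fun i => b i - c i) = V := by
    have : (fun i => b i - c i) = (fun i => (a i - c i) + α) := by
      funext i; simp [hb]; ring
    rw [this, eVar_shift hN]
  have hVpos : 0 < V + ε := by
    have := eVar_nonneg (fun i => a i - c i)
    rw [← hV] at this; linarith
  rw [cost, cost, hmean, hvar, ← hm, ← hV, div_le_div_iff₀ hVpos hVpos] at hle
  nlinarith
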